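/- Let V : [0,T] → ℝ^d be C¹ and satisfy dV/dt = A(t) − V(t) where |A(t)| ≤ R_V^t := max over past times up to t of the speeds, and suppose R_V^t is nondecreasing with R_V^t determined by sup_{s ≤ t} |V(s)| together with an initial bound R_V^0. Then |V(t)| ≤ R_V^0 for all t ∈ [0,T], i.e., the velocity support radius of the delayed Vlasov alignment equation does not grow: R_V^t ≤ R_V^0, and consequently the spatial support radius satisfies R_X^t ≤ R_X^0 + t R_V^0. -/

import Mathlib

open Set

theorem characteristics_support_estimate
    {d : ℕ} (T : ℝ) (hT : 0 < T)
    (V X A : ℝ → EuclideanSpace ℝ (Fin d))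
    (RV0 RX0 : ℝ) (hRV0 : 0 ≤ RV0) (hRX0 : 0 ≤ RX0)
    (RV : ℝ → ℝ)
    (hRV : ∀ t ∈ Icc (0 : ℝ) T,
      RV t = max RV0 (sSup ((fun s => ‖V s‖) '' Icc 0 t)))
    (hV0 : ‖V 0‖ ≤ RV0) (hX0 : ‖X 0‖ ≤ RX0)
    (hVc : ContinuousOn V (Icc 0 T))
    (hVode : ∀ t ∈ Icc (0 : ℝ) T, HasDerivAt V (A t - V t) t)
    (hXode : ∀ t ∈ Icc (0 : ℝ) T, HasDerivAt X (V t) t)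
    (hA : ∀ t ∈ Icc (0 : ℝ) T, ‖A t‖ ≤ RV t) :
    ∀ t ∈ Icc (0 : ℝ) T,
      ‖V t‖ ≤ RV0 ∧ RV t ≤ RV0 ∧ ‖X t‖ ≤ RX0 + t * RV0 := by
  set M : ℝ → ℝ := fun t => sSup ((fun s => ‖V s‖) '' Icc 0 t) with hM
  -- boundedness of the image of the norm on [0,T]
  have hbddT : BddAbove ((fun s => ‖V s‖) '' Icc (0:ℝ) T) :=
    (isCompact_Icc.image_of_continuousOn hVc.norm).bddAbove
  have hbdd : ∀ t ∈ Icc (0:ℝ) T, BddAbove ((fun s => ‖V s‖) '' Icc (0:ℝ) t) :=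
    fun t ht => hbddT.mono (image_mono (Icc_subset_Icc_right ht.2))
  -- main claim: RV t ≤ RV0 on [0,T]
  have key : ∀ t₁ ∈ Icc (0:ℝ) T, max RV0 (M t₁) ≤ RV0 := by
    intro t₁ ht₁
    set K := max RV0 (M t₁) with hK
    have hne : ((fun s => ‖V s‖) '' Icc (0:ℝ) t₁).Nonempty :=
      ⟨‖V 0‖, ⟨0, ⟨le_refl 0, ht₁.1⟩, rfl⟩⟩
    -- every past value is ≤ K, and ‖A s‖ ≤ K on [0,t₁]
    have hVK : ∀ s ∈ Icc (0:ℝ) t₁, ‖V s‖ ≤ K := fun s hs =>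
      le_trans (le_csSup (hbdd t₁ ht₁) ⟨s, hs, rfl⟩) (le_max_right _ _)
    have hAK : ∀ s ∈ Icc (0:ℝ) t₁, ‖A s‖ ≤ K := by
      intro s hs
      have hsT : s ∈ Icc (0:ℝ) T := ⟨hs.1, hs.2.trans ht₁.2⟩
      have hMs : M s ≤ M t₁ :=
        csSup_le_csSup (hbdd t₁ ht₁) ⟨‖V 0‖, ⟨0, ⟨le_refl 0, hs.1⟩, rfl⟩⟩
          (image_mono (Icc_subset_Icc_right hs.2))
      calc ‖A s‖ ≤ RV s := hA s hsT
        _ = max RV0 (M s) := hRV s hsT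
        _ ≤ K := max_le (le_max_left _ _) (hMs.trans (le_max_right _ _))
    -- Gronwall on f s = exp s • V s
    have hgron : ∀ s ∈ Icc (0:ℝ) t₁,
        ‖Real.exp s • V s‖ ≤ RV0 + (Real.exp s - 1) * K := by
      have hfc : ContinuousOn (fun s => Real.exp s • V s) (Icc (0:ℝ) t₁) :=
        Real.continuous_exp.continuousOn.smul
          (hVc.mono (Icc_subset_Icc_right ht₁.2))
      have hf' : ∀ s ∈ Ico (0:ℝ) t₁,
          HasDerivWithinAt (fun s => Real.exp s • V s) (Real.exp s • A s) (Ici s) s := by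
        intro s hs
        have hsT : s ∈ Icc (0:ℝ) T := ⟨hs.1, hs.2.le.trans ht₁.2⟩
        have := (Real.hasDerivAt_exp s).smul (hVode s hsT)
        have h2 : Real.exp s • (A s - V s) + Real.exp s • V s = Real.exp s • A s := by
          rw [smul_sub]; abel
        rw [h2] at this
        exact this.hasDerivWithinAt
      have hB : ∀ x, HasDerivAt (fun s => RV0 + (Real.exp s - 1) * K)
          (Real.exp x * K) x := fun x =>
        (((Real.hasDerivAt_exp x).sub_const 1).mul_const K).const_add RV0
      have hbound : ∀ s ∈ Ico (0:ℝ) t₁, ‖Real.exp s • A s‖ ≤ Real.exp s * K := by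
        intro s hs
        rw [norm_smul, Real.norm_eq_abs, abs_of_pos (Real.exp_pos s)]
        exact mul_le_mul_of_nonneg_left (hAK s ⟨hs.1, hs.2.le⟩) (Real.exp_pos s).le
      have ha0 : ‖Real.exp 0 • V 0‖ ≤ RV0 + (Real.exp 0 - 1) * K := by
        simpa [Real.exp_zero] using hV0
      intro s hs
      exact image_norm_le_of_norm_deriv_right_le_deriv_boundary hfc hf' ha0 hB hbound hs
    -- deduce ‖V s‖ ≤ K + (RV0 - K) * exp (-t₁) on [0,t₁]
    have hRV0K : RV0 ≤ K := le_max_left _ _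
    have hexp : ∀ s ∈ Icc (0:ℝ) t₁, ‖V s‖ ≤ K + (RV0 - K) * Real.exp (-t₁) := by
      intro s hs
      have h := hgron s hs
      rw [norm_smul, Real.norm_eq_abs, abs_of_pos (Real.exp_pos s)] at h
      have hes : Real.exp s ≤ Real.exp t₁ := Real.exp_le_exp.2 hs.2
      have h1 : ‖V s‖ ≤ K + (RV0 - K) * Real.exp (-s) := by
        rw [Real.exp_neg]
        have hp := Real.exp_pos s
        rw [← mul_le_mul_iff_right₀ hp]
        nlinarith [h, mul_inv_cancel₀ hp.ne']
      have h2 : (RV0 - K) * Real.exp (-s) ≤ (RV0 - K) * Real.exp (-t₁) := by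
        apply mul_le_mul_of_nonpos_left (Real.exp_le_exp.2 (neg_le_neg hs.2)) (sub_nonpos.2 hRV0K)
      linarith
    -- conclude K ≤ RV0
    have hMC : M t₁ ≤ K + (RV0 - K) * Real.exp (-t₁) :=
      csSup_le hne (by rintro x ⟨s, hs, rfl⟩; exact hexp s hs)
    have hRC : RV0 ≤ K + (RV0 - K) * Real.exp (-t₁) := by
      nlinarith [Real.exp_pos (-t₁), Real.exp_le_one_iff.2 (neg_nonpos.2 ht₁.1), sub_nonneg.2 hRV0K]
    have hKC : K ≤ K + (RV0 - K) * Real.exp (-t₁) := max_le hRC hMC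
    nlinarith [Real.exp_pos (-t₁)]
  -- now each conclusion
  have hVle : ∀ t ∈ Icc (0:ℝ) T, ‖V t‖ ≤ RV0 := by
    intro t ht
    have h1 : ‖V t‖ ≤ M t := le_csSup (hbdd t ht) ⟨t, ⟨ht.1, le_refl t⟩, rfl⟩
    exact h1.trans ((le_max_right RV0 (M t)).trans (key t ht))
  intro t ht
  refine ⟨hVle t ht, ?_, ?_⟩
  · rw [hRV t ht]; exact key t ht
  · -- X bound
    have hXc : ContinuousOn X (Icc (0:ℝ) t) := fun s hs =>
      ((hXode s ⟨hs.1, hs.2.trans ht.2⟩).continuousAt).continuousWithinAt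
    have hX' : ∀ s ∈ Ico (0:ℝ) t, HasDerivWithinAt X (V s) (Ici s) s := fun s hs =>
      (hXode s ⟨hs.1, hs.2.le.trans ht.2⟩).hasDerivWithinAt
    have hbound : ∀ s ∈ Ico (0:ℝ) t, ‖V s‖ ≤ RV0 := fun s hs =>
      hVle s ⟨hs.1, hs.2.le.trans ht.2⟩
    have := norm_image_sub_le_of_norm_deriv_right_le_segment hXc hX' hbound t
      ⟨ht.1, le_refl t⟩
    calc ‖X t‖ ≤ ‖X t - X 0‖ + ‖X 0‖ := by
          simpa using norm_add_le (X t - X 0) (X 0)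
      _ ≤ RV0 * (t - 0) + RX0 := add_le_add this hX0
      _ = RX0 + t * RV0 := by ring
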